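/- For real l' with 0 < l' < π/2 and all real x, the complex number cos(l' - ix) and 1 - sin(l' - ix) satisfy |cos(l' - ix)| / |1 - sin(l' - ix)| ≤ √((1 + sin l')/(1 - sin l')). -/

import Mathlib

open Complex

/-- For `0 < l' < π/2` and all real `x`,
`|cos (l' - i x)| / |1 - sin (l' - i x)| ≤ √((1 + sin l') / (1 - sin l'))`. -/
theorem stmt_9 (l' : ℝ) (hl0 : 0 < l') (hl : l' < Real.pi / 2) (x : ℝ) :
    ‖Complex.cos ((l' : ℂ) - Complex.I * (x : ℂ))‖ /
      ‖1 - Complex.sin ((l' : ℂ) - Complex.I * (x : ℂ))‖ ≤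
      Real.sqrt ((1 + Real.sin l') / (1 - Real.sin l')) := by
  set s := Real.sin l' with hs
  set c := Real.cos l' with hc
  set ch := Real.cosh x with hch
  set sh := Real.sinh x with hsh
  have hIx : Complex.I * (x : ℂ) = (x : ℂ) * Complex.I := by ring
  have hcos : Complex.cos ((l' : ℂ) - Complex.I * (x : ℂ))
      = ((c * ch : ℝ) : ℂ) + ((s * sh : ℝ) : ℂ) * Complex.I := by
    rw [hIx, Complex.cos_sub, Complex.cos_mul_I, Complex.sin_mul_I]
    push_cast [hs, hc, hch, hsh]
    ring
  have hsin : (1 : ℂ) - Complex.sin ((l' : ℂ) - Complex.I * (x : ℂ))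
      = ((1 - s * ch : ℝ) : ℂ) + ((c * sh : ℝ) : ℂ) * Complex.I := by
    rw [hIx, Complex.sin_sub, Complex.cos_mul_I, Complex.sin_mul_I]
    push_cast [hs, hc, hch, hsh]
    ring
  rw [hcos, hsin, Complex.norm_add_mul_I, Complex.norm_add_mul_I]
  have hs0 : 0 ≤ s := Real.sin_nonneg_of_nonneg_of_le_pi (le_of_lt hl0)
    (le_trans (le_of_lt hl) (by linarith [Real.pi_pos]))
  have hcpos : 0 < c := by
    rw [hc]; exact Real.cos_pos_of_mem_Ioo ⟨by linarith [Real.pi_pos], hl⟩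
  have hc2 : c ^ 2 = 1 - s ^ 2 := by
    rw [hc, hs]; nlinarith [Real.sin_sq_add_cos_sq l']
  have hs1 : s < 1 := by nlinarith
  have hch1 : 1 ≤ ch := Real.one_le_cosh x
  have hsh2 : sh ^ 2 = ch ^ 2 - 1 := by
    rw [hsh, hch]; nlinarith [Real.cosh_sq x]
  have hN : (c * ch) ^ 2 + (s * sh) ^ 2 = ch ^ 2 - s ^ 2 := by nlinarith
  have hDeq : (1 - s * ch) ^ 2 + (c * sh) ^ 2 = (ch - s) ^ 2 := by nlinarith
  have hD : 0 < (1 - s * ch) ^ 2 + (c * sh) ^ 2 := by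
    rw [hDeq]; nlinarith
  rw [← Real.sqrt_div (by positivity)]
  apply Real.sqrt_le_sqrt
  rw [div_le_div_iff₀ hD (by linarith), hN, hDeq]
  nlinarith [mul_nonneg hs0 (mul_nonneg (by linarith : (0:ℝ) ≤ ch - s) (by linarith : (0:ℝ) ≤ ch - 1))]
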